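/- arXiv:2503.06538 — 7 statements merged into one kernel-verified Lean document; each statement's English description precedes it below -/
import Mathlib

section
/- For every integer t with 1 ≤ t < c and S_t(p_{+·}) ≠ 1, the measure λ^{(t)}_{Y|X} = (∑_{i=1}^{r} S_t(p_{i·}) − S_t(p_{+·})) / (1 − S_t(p_{+·})) satisfies 0 ≤ λ^{(t)}_{Y|X} ≤ 1. -/
/-- `Smax t q` : the maximum, over subsets `T` of the index type with `T.card = t`,
of `∑ j ∈ T, q j` (i.e. the sum of the `t` largest entries of `q`). -/
noncomputable def Smax {n : ℕ} (t : ℕ) (q : Fin n → ℝ) : ℝ :=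
  sSup ((fun T : Finset (Fin n) => ∑ j ∈ T, q j) '' {T : Finset (Fin n) | T.card = t})

/-- Row marginals `p_{i+}`. -/
noncomputable def rowMarg {r c : ℕ} (p : Fin r → Fin c → ℝ) : Fin r → ℝ :=
  fun i => ∑ j, p i j

/-- Column marginals `p_{+j}`. -/
noncomputable def colMarg {r c : ℕ} (p : Fin r → Fin c → ℝ) : Fin c → ℝ :=
  fun j => ∑ i, p i j

/-- The measure `λ^{(t)}_{Y|X}` based on multi-categorical proportional reduction in error. -/
noncomputable def lambdaT {r c : ℕ} (t : ℕ) (p : Fin r → Fin c → ℝ) : ℝ :=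
  (∑ i, Smax t (p i) - Smax t (colMarg p)) / (1 - Smax t (colMarg p))

/-- The alternative measure `λ^{K(t)}_{Y|X}`. -/
noncomputable def lambdaKT {r c : ℕ} (t : ℕ) (p : Fin r → Fin c → ℝ) : ℝ :=
  (Real.sqrt (∑ i, (Smax t (p i)) ^ 2 / rowMarg p i) - Smax t (colMarg p)) /
    (1 - Smax t (colMarg p))

/-- For `1 ≤ t < c` with `S_t(p_{+·}) ≠ 1`,
the measure `λ^{(t)}_{Y|X}` lies in `[0,1]`. -/
theorem lambdaT_mem_unitInterval
    (r c : ℕ) (hr : 2 ≤ r) (hc : 2 ≤ c)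
    (p : Fin r → Fin c → ℝ) (hp : ∀ i j, 0 ≤ p i j)
    (hsum : ∑ i, ∑ j, p i j = 1)
    (t : ℕ) (ht1 : 1 ≤ t) (htc : t < c)
    (hS : Smax t (colMarg p) ≠ 1) :
    0 ≤ lambdaT t p ∧ lambdaT t p ≤ 1 := by
  have hbdd : ∀ (m : ℕ) (q : Fin m → ℝ),
      BddAbove ((fun T : Finset (Fin m) => ∑ j ∈ T, q j) '' {T : Finset (Fin m) | T.card = t}) :=
    fun m q => (Set.toFinite _).image _ |>.bddAbove
  have hle_smax : ∀ (m : ℕ) (q : Fin m → ℝ) (T : Finset (Fin m)), T.card = t →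
      ∑ j ∈ T, q j ≤ Smax t q := by
    intro m q T hT
    exact le_csSup (hbdd m q) ⟨T, hT, rfl⟩
  have hsmax_le : ∀ (m : ℕ) (q : Fin m → ℝ) (B : ℝ), t ≤ m →
      (∀ T : Finset (Fin m), T.card = t → ∑ j ∈ T, q j ≤ B) → Smax t q ≤ B := by
    intro m q B htm h
    obtain ⟨T, -, hT⟩ := Finset.exists_subset_card_eq (s := (Finset.univ : Finset (Fin m))) (n := t)
      (by simpa using htm)
    exact csSup_le ⟨_, ⟨T, hT, rfl⟩⟩ (by rintro x ⟨T', hT', rfl⟩; exact h T' hT')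
  have htc' : t ≤ c := le_of_lt htc
  -- S_t(col) ≤ ∑ Smax(p i)
  have h1 : Smax t (colMarg p) ≤ ∑ i, Smax t (p i) := by
    apply hsmax_le c _ _ htc'
    intro T hT
    have : ∑ j ∈ T, colMarg p j = ∑ i, ∑ j ∈ T, p i j := by
      unfold colMarg; rw [Finset.sum_comm]
    rw [this]
    exact Finset.sum_le_sum fun i _ => hle_smax c (p i) T hT
  -- each Smax t (p i) ≤ row sum
  have h2 : ∑ i, Smax t (p i) ≤ 1 := by
    calc ∑ i, Smax t (p i) ≤ ∑ i, ∑ j, p i j := by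
          apply Finset.sum_le_sum
          intro i _
          apply hsmax_le c _ _ htc'
          intro T _
          exact Finset.sum_le_sum_of_subset_of_nonneg (Finset.subset_univ T)
            (fun j _ _ => hp i j)
      _ = 1 := hsum
  have h3 : Smax t (colMarg p) ≤ 1 := le_trans h1 h2
  have h4 : Smax t (colMarg p) < 1 := lt_of_le_of_ne h3 hS
  have hd : 0 < 1 - Smax t (colMarg p) := by linarith
  constructor
  · exact div_nonneg (by linarith) (le_of_lt hd)
  · rw [lambdaT, div_le_one hd]; linarith
end

section
/- Let t be an integer with 1 ≤ t < c and S_t(p_{+·}) ≠ 1. If the table is independent, i.e., p i j = p_{i+} · p_{+j} for all i and j, then λ^{(t)}_{Y|X} = 0. -/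
lemma Smax_smul {n t : ℕ} (a : ℝ) (ha : 0 ≤ a) (q : Fin n → ℝ) :
    Smax t (fun j => a * q j) = a * Smax t q := by
  unfold Smax
  rw [← smul_eq_mul, ← Real.sSup_smul_of_nonneg ha]
  congr 1
  ext x
  simp only [Set.mem_image, Set.mem_smul_set, smul_eq_mul, Finset.mul_sum]
  constructor
  · rintro ⟨T, hT, rfl⟩; exact ⟨∑ j ∈ T, q j, ⟨T, hT, rfl⟩, by simp [Finset.mul_sum]⟩
  · rintro ⟨y, ⟨T, hT, rfl⟩, rfl⟩; exact ⟨T, hT, by simp [Finset.mul_sum]⟩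

/-- independence implies `λ^{(t)}_{Y|X} = 0`. -/
theorem lambdaT_eq_zero_of_indep
    (r c : ℕ) (hr : 2 ≤ r) (hc : 2 ≤ c)
    (p : Fin r → Fin c → ℝ) (hp : ∀ i j, 0 ≤ p i j)
    (hsum : ∑ i, ∑ j, p i j = 1)
    (t : ℕ) (ht1 : 1 ≤ t) (htc : t < c)
    (hS : Smax t (colMarg p) ≠ 1)
    (hind : ∀ i j, p i j = rowMarg p i * colMarg p j) :
    lambdaT t p = 0 := by
  have hrow : ∀ i, 0 ≤ rowMarg p i := fun i =>
    Finset.sum_nonneg fun j _ => hp i j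
  have hnum : ∑ i, Smax t (p i) = Smax t (colMarg p) := by
    have : ∀ i, Smax t (p i) = rowMarg p i * Smax t (colMarg p) := by
      intro i
      have : p i = fun j => rowMarg p i * colMarg p j := funext fun j => hind i j
      rw [this, Smax_smul _ (hrow i)]
    rw [Finset.sum_congr rfl fun i _ => this i, ← Finset.sum_mul]
    simp [rowMarg, hsum]
  rw [lambdaT, hnum, sub_self, zero_div]
end

section
/- Let t be an integer with 1 ≤ t < c and S_t(p_{+·}) ≠ 1. Then λ^{(t)}_{Y|X} = 1 if and only if p_{i+} = S_t(p_{i·}) for every row i = 1, …, r (i.e., each row of the table contains at most t nonzero cell probabilities). -/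
lemma Smax_nonempty {n : ℕ} (t : ℕ) (ht : t ≤ n) (q : Fin n → ℝ) :
    ((fun T : Finset (Fin n) => ∑ j ∈ T, q j) '' {T : Finset (Fin n) | T.card = t}).Nonempty := by
  obtain ⟨T, _, hT2⟩ := Finset.exists_subset_card_eq (s := (Finset.univ : Finset (Fin n)))
    (by simpa using ht)
  exact ⟨∑ j ∈ T, q j, ⟨T, hT2, rfl⟩⟩

lemma Smax_finite {n : ℕ} (t : ℕ) (q : Fin n → ℝ) :
    ((fun T : Finset (Fin n) => ∑ j ∈ T, q j) '' {T : Finset (Fin n) | T.card = t}).Finite :=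
  (Set.finite_univ.subset (Set.subset_univ _)).image _

lemma Smax_le_sum {n : ℕ} (t : ℕ) (ht : t ≤ n) (q : Fin n → ℝ) (hq : ∀ j, 0 ≤ q j) :
    Smax t q ≤ ∑ j, q j := by
  apply csSup_le (Smax_nonempty t ht q)
  rintro x ⟨T, hT, rfl⟩
  exact Finset.sum_le_sum_of_subset_of_nonneg (Finset.subset_univ T)
    (fun j _ _ => hq j)

/-- `λ^{(t)}_{Y|X} = 1` iff `p_{i+} = S_t(p_{i·})` for every row `i`. -/
theorem lambdaT_eq_one_iff
    (r c : ℕ) (hr : 2 ≤ r) (hc : 2 ≤ c)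
    (p : Fin r → Fin c → ℝ) (hp : ∀ i j, 0 ≤ p i j)
    (hsum : ∑ i, ∑ j, p i j = 1)
    (t : ℕ) (ht1 : 1 ≤ t) (htc : t < c)
    (hS : Smax t (colMarg p) ≠ 1) :
    lambdaT t p = 1 ↔ ∀ i, rowMarg p i = Smax t (p i) := by
  have hden : 1 - Smax t (colMarg p) ≠ 0 := sub_ne_zero.mpr (Ne.symm hS)
  have hle : ∀ i, Smax t (p i) ≤ rowMarg p i := fun i =>
    Smax_le_sum t htc.le (p i) (hp i)
  have hrowsum : ∑ i, rowMarg p i = 1 := hsum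
  constructor
  · intro h i
    have h1 : ∑ i, Smax t (p i) - Smax t (colMarg p) = 1 - Smax t (colMarg p) := by
      have := (div_eq_one_iff_eq hden).mp h
      linarith [this]
    have h2 : ∑ i, Smax t (p i) = ∑ i, rowMarg p i := by
      rw [hrowsum]; linarith
    have := (Finset.sum_eq_sum_iff_of_le (fun i _ => hle i)).mp h2 i (Finset.mem_univ i)
    exact this.symm
  · intro h
    have h2 : ∑ i, Smax t (p i) = 1 := by
      rw [← hrowsum]
      exact Finset.sum_congr rfl (fun i _ => (h i).symm)
    unfold lambdaT
    rw [h2, div_self hden]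
end

section
/- Assume p_{i+} > 0 for every row i. For every integer t with 1 ≤ t < c and S_t(p_{+·}) ≠ 1, the measure λ^{K(t)}_{Y|X} = (√(∑_{i=1}^{r} S_t(p_{i·})² / p_{i+}) − S_t(p_{+·})) / (1 − S_t(p_{+·})) satisfies 0 ≤ λ^{K(t)}_{Y|X} ≤ 1. -/
lemma le_Smax {n t : ℕ} (q : Fin n → ℝ) (T : Finset (Fin n)) (hT : T.card = t) :
    ∑ j ∈ T, q j ≤ Smax t q :=
  le_csSup (Set.Finite.bddAbove ((Set.toFinite _).image _)) ⟨T, hT, rfl⟩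

lemma Smax_spec {n t : ℕ} (ht : t ≤ n) (q : Fin n → ℝ) :
    ∃ T : Finset (Fin n), T.card = t ∧ Smax t q = ∑ j ∈ T, q j := by
  have hne : ({T : Finset (Fin n) | T.card = t} : Set (Finset (Fin n))).Nonempty := by
    obtain ⟨T, _, hT⟩ := (Finset.exists_subset_card_eq (s := (Finset.univ : Finset (Fin n))) (n := t)
      (by simpa using ht))
    exact ⟨T, hT⟩
  have hmem : Smax t q ∈ ((fun T : Finset (Fin n) => ∑ j ∈ T, q j) ''
      {T : Finset (Fin n) | T.card = t}) :=
    Set.Nonempty.csSup_mem (hne.image _) ((Set.toFinite _).image _)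
  obtain ⟨T, hT, hEq⟩ := hmem
  exact ⟨T, hT, hEq.symm⟩

/-- For `1 ≤ t < c` with `S_t(p_{+·}) ≠ 1` and positive row marginals,
the alternative measure `λ^{K(t)}_{Y|X}` lies in `[0,1]`. -/
theorem lambdaKT_mem_unitInterval
    (r c : ℕ) (hr : 2 ≤ r) (hc : 2 ≤ c)
    (p : Fin r → Fin c → ℝ) (hp : ∀ i j, 0 ≤ p i j)
    (hsum : ∑ i, ∑ j, p i j = 1)
    (hpos : ∀ i, 0 < rowMarg p i)
    (t : ℕ) (ht1 : 1 ≤ t) (htc : t < c)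
    (hS : Smax t (colMarg p) ≠ 1) :
    0 ≤ lambdaKT t p ∧ lambdaKT t p ≤ 1 := by
  set S := Smax t (colMarg p) with hSdef
  set A := ∑ i, (Smax t (p i)) ^ 2 / rowMarg p i with hAdef
  have htc' : t ≤ c := le_of_lt htc
  -- subset achieving S
  obtain ⟨T₀, hT₀card, hT₀⟩ := Smax_spec htc' (colMarg p)
  have hSrow : S = ∑ i, ∑ j ∈ T₀, p i j := by
    rw [hSdef, hT₀]; rw [Finset.sum_comm]; rfl
  -- each row's Smax nonneg and ≥ its T₀-sum
  have hrow_ge : ∀ i, ∑ j ∈ T₀, p i j ≤ Smax t (p i) := fun i => le_Smax (p i) T₀ hT₀card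
  have hrow_nonneg : ∀ i, 0 ≤ Smax t (p i) := fun i =>
    le_trans (Finset.sum_nonneg fun j _ => hp i j) (hrow_ge i)
  -- row Smax ≤ rowMarg
  have hrow_le : ∀ i, Smax t (p i) ≤ rowMarg p i := by
    intro i
    obtain ⟨T, hTcard, hTeq⟩ := Smax_spec htc' (p i)
    rw [hTeq]
    exact Finset.sum_le_sum_of_subset_of_nonneg (Finset.subset_univ T)
      (fun j _ _ => hp i j)
  -- S nonneg and ≤ 1
  have hS0 : 0 ≤ S := by
    rw [hSdef, hT₀]
    exact Finset.sum_nonneg fun j _ => Finset.sum_nonneg fun i _ => hp i j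
  have hS1 : S ≤ 1 := by
    rw [hSrow, ← hsum]
    exact Finset.sum_le_sum fun i _ =>
      Finset.sum_le_sum_of_subset_of_nonneg (Finset.subset_univ T₀) (fun j _ _ => hp i j)
  have hSlt1 : S < 1 := lt_of_le_of_ne hS1 hS
  have hden : 0 < 1 - S := by linarith
  have hmsum : ∑ i, rowMarg p i = 1 := by
    simpa [rowMarg] using hsum
  -- A ≤ 1
  have hA1 : A ≤ 1 := by
    rw [hAdef, ← hmsum]
    refine Finset.sum_le_sum fun i _ => ?_
    rw [div_le_iff₀ (hpos i)]
    have := hrow_le i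
    nlinarith [hrow_nonneg i, hpos i]
  have hA0 : 0 ≤ A :=
    Finset.sum_nonneg fun i _ => div_nonneg (sq_nonneg _) (hpos i).le
  -- Cauchy-Schwarz: (∑ Smax)^2 ≤ A
  have hCS : (∑ i, Smax t (p i)) ^ 2 ≤ A := by
    have key := Finset.sq_sum_div_le_sum_sq_div Finset.univ (fun i => Smax t (p i))
      (fun i _ => hpos i)
    rw [hmsum, div_one] at key
    exact key
  -- S ≤ ∑ Smax
  have hSsum : S ≤ ∑ i, Smax t (p i) := by
    rw [hSrow]; exact Finset.sum_le_sum fun i _ => hrow_ge i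
  have hsqrt_ge : S ≤ Real.sqrt A := by
    have h1 : (∑ i, Smax t (p i)) ≤ Real.sqrt A := by
      have h0 : 0 ≤ ∑ i, Smax t (p i) := Finset.sum_nonneg fun i _ => hrow_nonneg i
      calc ∑ i, Smax t (p i) = Real.sqrt ((∑ i, Smax t (p i)) ^ 2) := (Real.sqrt_sq h0).symm
        _ ≤ Real.sqrt A := Real.sqrt_le_sqrt hCS
    linarith
  have hsqrt_le : Real.sqrt A ≤ 1 := by
    rw [show (1:ℝ) = Real.sqrt 1 by simp]
    exact Real.sqrt_le_sqrt hA1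
  constructor
  · exact div_nonneg (by linarith) hden.le
  · rw [lambdaKT, div_le_one hden]
    show Real.sqrt A - S ≤ 1 - S
    linarith
end

section
/- Assume p_{i+} > 0 for every row i. For every integer t with 1 ≤ t < c and S_t(p_{+·}) ≠ 1, the alternative measure dominates the original one: λ^{K(t)}_{Y|X} ≥ λ^{(t)}_{Y|X}. -/
lemma smax_bddAbove {n : ℕ} (t : ℕ) (q : Fin n → ℝ) :
    BddAbove ((fun T : Finset (Fin n) => ∑ j ∈ T, q j) '' {T : Finset (Fin n) | T.card = t}) :=
  (Set.toFinite _).image _ |>.bddAbove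

lemma smax_exists_card {n t : ℕ} (ht : t ≤ n) : ∃ T : Finset (Fin n), T.card = t := by
  obtain ⟨T, _, hT⟩ := Finset.exists_subset_card_eq (s := (Finset.univ : Finset (Fin n))) (n := t)
    (by simpa using ht)
  exact ⟨T, hT⟩

lemma smax_nonneg {n : ℕ} {t : ℕ} (ht : t ≤ n) (q : Fin n → ℝ) (hq : ∀ j, 0 ≤ q j) :
    0 ≤ Smax t q := by
  obtain ⟨T, hT⟩ := smax_exists_card (n := n) ht
  exact le_trans (Finset.sum_nonneg fun j _ => hq j)
    (le_csSup (smax_bddAbove t q) ⟨T, hT, rfl⟩)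

lemma smax_le {n : ℕ} {t : ℕ} (ht : t ≤ n) (q : Fin n → ℝ) {M : ℝ}
    (h : ∀ T : Finset (Fin n), T.card = t → ∑ j ∈ T, q j ≤ M) : Smax t q ≤ M := by
  obtain ⟨T, hT⟩ := smax_exists_card (n := n) ht
  exact csSup_le ⟨_, ⟨T, hT, rfl⟩⟩ (by rintro x ⟨T, hT, rfl⟩; exact h T hT)

/-- `λ^{K(t)}_{Y|X} ≥ λ^{(t)}_{Y|X}`. -/
theorem lambdaKT_ge_lambdaT
    (r c : ℕ) (hr : 2 ≤ r) (hc : 2 ≤ c)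
    (p : Fin r → Fin c → ℝ) (hp : ∀ i j, 0 ≤ p i j)
    (hsum : ∑ i, ∑ j, p i j = 1)
    (hpos : ∀ i, 0 < rowMarg p i)
    (t : ℕ) (ht1 : 1 ≤ t) (htc : t < c)
    (hS : Smax t (colMarg p) ≠ 1) :
    lambdaT t p ≤ lambdaKT t p := by

  have hcol : ∀ j, 0 ≤ colMarg p j := fun j => Finset.sum_nonneg fun i _ => hp i j
  have hrow1 : ∑ i, rowMarg p i = 1 := hsum
  have hS1 : Smax t (colMarg p) ≤ 1 := by
    refine smax_le htc.le _ fun T hT => ?_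
    calc ∑ j ∈ T, colMarg p j ≤ ∑ j, colMarg p j :=
          Finset.sum_le_sum_of_subset_of_nonneg (Finset.subset_univ T)
            (fun j _ _ => hcol j)
      _ = 1 := by rw [← hsum, Finset.sum_comm]; rfl
  have hSlt : Smax t (colMarg p) < 1 := lt_of_le_of_ne hS1 hS
  have hden : 0 < 1 - Smax t (colMarg p) := by linarith
  have hA : 0 ≤ ∑ i, Smax t (p i) :=
    Finset.sum_nonneg fun i _ => smax_nonneg htc.le _ (hp i)
  have key : ∑ i, Smax t (p i) ≤
      Real.sqrt (∑ i, (Smax t (p i)) ^ 2 / rowMarg p i) := by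
    rw [show (∑ i, Smax t (p i)) = Real.sqrt ((∑ i, Smax t (p i)) ^ 2) from
      (Real.sqrt_sq hA).symm]
    apply Real.sqrt_le_sqrt
    have hcs2 := Finset.sum_mul_sq_le_sq_mul_sq (Finset.univ : Finset (Fin r))
      (fun i => Smax t (p i) / Real.sqrt (rowMarg p i))
      (fun i => Real.sqrt (rowMarg p i))
    have heq1 : ∀ i : Fin r,
        Smax t (p i) / Real.sqrt (rowMarg p i) * Real.sqrt (rowMarg p i) =
          Smax t (p i) := fun i =>
    div_mul_cancel₀ _ (Real.sqrt_ne_zero'.mpr (hpos i))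
    have heq2 : ∀ i : Fin r,
        (Smax t (p i) / Real.sqrt (rowMarg p i)) ^ 2 =
          (Smax t (p i)) ^ 2 / rowMarg p i := fun i => by
      rw [div_pow, Real.sq_sqrt (hpos i).le]
    have heq3 : ∀ i : Fin r, (Real.sqrt (rowMarg p i)) ^ 2 = rowMarg p i :=
      fun i => Real.sq_sqrt (hpos i).le
    simp only [heq1, heq2, heq3] at hcs2
    rw [hrow1, mul_one] at hcs2
    exact hcs2
  unfold lambdaT lambdaKT
  gcongr
end

section
/- Assume p_{i+} > 0 for every row i. Let t be an integer with 1 ≤ t < c and S_t(p_{+·}) ≠ 1. If the quasi-independence condition S_k(p_{i·}) = p_{i+} · S_k(p_{+·}) holds for every row i and every integer k with 1 ≤ k ≤ t (equivalently, the k-th largest entry of each row i equals p_{i+} times the k-th largest column marginal for all k ≤ t), then λ^{K(t)}_{Y|X} = 0. -/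
/-- quasi-independence up to level `t` implies `λ^{K(t)}_{Y|X} = 0`. -/
theorem lambdaKT_eq_zero_of_quasiIndep
    (r c : ℕ) (hr : 2 ≤ r) (hc : 2 ≤ c)
    (p : Fin r → Fin c → ℝ) (hp : ∀ i j, 0 ≤ p i j)
    (hsum : ∑ i, ∑ j, p i j = 1)
    (hpos : ∀ i, 0 < rowMarg p i)
    (t : ℕ) (ht1 : 1 ≤ t) (htc : t < c)
    (hS : Smax t (colMarg p) ≠ 1)
    (hqi : ∀ i, ∀ k, 1 ≤ k → k ≤ t →
      Smax k (p i) = rowMarg p i * Smax k (colMarg p)) :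
    lambdaKT t p = 0 := by
  set S := Smax t (colMarg p) with hSdef
  have hSnn : 0 ≤ S := by
    obtain ⟨T, -, hT⟩ := Finset.exists_subset_card_eq (s := (Finset.univ : Finset (Fin c))) (n := t)
      (by simpa using htc.le)
    have hbdd : BddAbove ((fun T : Finset (Fin c) => ∑ j ∈ T, colMarg p j) ''
        {T : Finset (Fin c) | T.card = t}) :=
      (Set.Finite.image _ (Set.toFinite _)).bddAbove
    have h0 : 0 ≤ ∑ j ∈ T, colMarg p j :=
      Finset.sum_nonneg fun j _ => Finset.sum_nonneg fun i _ => hp i j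
    have hle : ∑ j ∈ T, colMarg p j ≤ S :=
      le_csSup hbdd ⟨T, hT, rfl⟩
    linarith
  have hrow : ∀ i, Smax t (p i) = rowMarg p i * S := fun i => hqi i t ht1 le_rfl
  have hrsum : ∑ i, rowMarg p i = 1 := by simpa [rowMarg] using hsum
  have hsumsq : ∑ i, (Smax t (p i)) ^ 2 / rowMarg p i = S ^ 2 := by
    have : ∀ i, (Smax t (p i)) ^ 2 / rowMarg p i = rowMarg p i * S ^ 2 := by
      intro i
      rw [hrow i]
      field_simp [(hpos i).ne']
    rw [Finset.sum_congr rfl fun i _ => this i, ← Finset.sum_mul, hrsum, one_mul]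
  have : Real.sqrt (∑ i, (Smax t (p i)) ^ 2 / rowMarg p i) = S := by
    rw [hsumsq, Real.sqrt_sq hSnn]
  unfold lambdaKT
  rw [← hSdef, this, sub_self, zero_div]
end

section
/- Assume p_{i+} > 0 for every row i and max_j p_{+j} ≠ 1. Then λ^{K(1)}_{Y|X} = 0 if and only if for every row i the maximum entry of row i equals p_{i+} times the maximum column marginal: max_j p_{ij} = p_{i+} · max_j p_{+j}. -/
lemma smax1_spec {n : ℕ} (hn : 0 < n) (q : Fin n → ℝ) :
    (∀ k, q k ≤ Smax 1 q) ∧ ∃ j, Smax 1 q = q j := by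
  have : Nonempty (Fin n) := ⟨⟨0, hn⟩⟩
  have hset : ((fun T : Finset (Fin n) => ∑ j ∈ T, q j) '' {T | T.card = 1}) = Set.range q := by
    ext x
    simp only [Set.mem_image, Set.mem_setOf_eq, Set.mem_range, Finset.card_eq_one]
    constructor
    · rintro ⟨T, ⟨a, rfl⟩, rfl⟩; exact ⟨a, (Finset.sum_singleton _ _).symm⟩
    · rintro ⟨j, rfl⟩; exact ⟨{j}, ⟨j, rfl⟩, Finset.sum_singleton _ _⟩
  have hfin : (Set.range q).Finite := Set.finite_range q
  have hne : (Set.range q).Nonempty := Set.range_nonempty q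
  constructor
  · intro k; rw [Smax, hset]; exact le_csSup hfin.bddAbove ⟨k, rfl⟩
  · rw [Smax, hset]
    obtain ⟨j, hj⟩ := hne.csSup_mem hfin
    exact ⟨j, hj.symm⟩

/-- `λ^{K(1)}_{Y|X} = 0` iff for every row `i`, the maximum entry of
row `i` equals `p_{i+}` times the maximum column marginal.  (Here `Smax 1 q` is the
maximum entry of `q`.) -/
theorem lambdaK1_eq_zero_iff
    (r c : ℕ) (hr : 2 ≤ r) (hc : 2 ≤ c)
    (p : Fin r → Fin c → ℝ) (hp : ∀ i j, 0 ≤ p i j)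
    (hsum : ∑ i, ∑ j, p i j = 1)
    (hpos : ∀ i, 0 < rowMarg p i)
    (hS : Smax 1 (colMarg p) ≠ 1) :
    lambdaKT 1 p = 0 ↔ ∀ i, Smax 1 (p i) = rowMarg p i * Smax 1 (colMarg p) := by
  have hrpos : 0 < r := by omega
  have hcpos : 0 < c := by omega
  set M : ℝ := Smax 1 (colMarg p) with hM
  set a : Fin r → ℝ := fun i => Smax 1 (p i) with ha
  set w : Fin r → ℝ := fun i => rowMarg p i with hw
  set S : ℝ := ∑ i, a i ^ 2 / w i with hSdef
  set A : ℝ := ∑ i, a i with hA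
  have hwpos : ∀ i, 0 < w i := hpos
  have hwsum : ∑ i, w i = 1 := by simpa [hw, rowMarg] using hsum
  have hai : ∀ i k, p i k ≤ a i := fun i => (smax1_spec hcpos (p i)).1
  have hane : ∀ i, 0 ≤ a i := by
    intro i
    obtain ⟨j, hj⟩ := (smax1_spec hcpos (p i)).2
    show Smax 1 (p i) ≥ 0
    rw [hj]
    exact hp i j
  have hcol : ∀ k, colMarg p k ≤ M := (smax1_spec hcpos (colMarg p)).1
  obtain ⟨j0, hj0⟩ := (smax1_spec hcpos (colMarg p)).2
  have hM0 : 0 ≤ M := by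
    rw [hM, hj0]
    exact Finset.sum_nonneg fun i _ => hp i j0
  have hAM : M ≤ A := by
    rw [hM, hj0]
    calc colMarg p j0 = ∑ i, p i j0 := rfl
      _ ≤ ∑ i, a i := Finset.sum_le_sum fun i _ => hai i j0
  have hA0 : 0 ≤ A := le_trans hM0 hAM
  have hS0 : 0 ≤ S := Finset.sum_nonneg fun i _ =>
    div_nonneg (sq_nonneg _) (hwpos i).le
  have hden : (1 : ℝ) - M ≠ 0 := sub_ne_zero.mpr (Ne.symm hS)
  -- key identity
  have expand : ∀ i, w i * (a i / w i - A) ^ 2 = a i ^ 2 / w i - 2 * (a i * A) + w i * A ^ 2 := by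
    intro i
    have hwne := (hwpos i).ne'
    field_simp
    ring
  have key : ∑ i, w i * (a i / w i - A) ^ 2 = S - A ^ 2 := by
    simp_rw [expand]
    rw [Finset.sum_add_distrib, Finset.sum_sub_distrib,
      show ∑ i, 2 * (a i * A) = 2 * A * ∑ i, a i by
        rw [Finset.mul_sum]; exact Finset.sum_congr rfl fun i _ => by ring,
      show ∑ i, w i * A ^ 2 = (∑ i, w i) * A ^ 2 from (Finset.sum_mul _ _ _).symm,
      hwsum, ← hA, ← hSdef]
    ring
  have hCS : A ^ 2 ≤ S := by
    have := Finset.sum_nonneg (fun i (_ : i ∈ Finset.univ) =>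
      mul_nonneg (hwpos i).le (sq_nonneg (a i / w i - A)))
    linarith [key]
  have hlam : lambdaKT 1 p = (Real.sqrt S - M) / (1 - M) := rfl
  constructor
  · intro h
    rw [hlam, div_eq_zero_iff] at h
    have hnum : Real.sqrt S = M := by
      rcases h with h | h
      · linarith [sub_eq_zero.mp h]
      · exact absurd h hden
    have hSM : S = M ^ 2 := by
      rw [← hnum, Real.sq_sqrt hS0]
    have hAeqM : A = M := by nlinarith
    have hzero : ∑ i, w i * (a i / w i - A) ^ 2 = 0 := by
      rw [key, hSM, hAeqM]; ring
    have heach := (Finset.sum_eq_zero_iff_of_nonneg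
      (fun i (_ : i ∈ Finset.univ) =>
        mul_nonneg (hwpos i).le (sq_nonneg (a i / w i - A)))).mp hzero
    intro i
    have hi := heach i (Finset.mem_univ i)
    have h2 : (a i / w i - A) ^ 2 = 0 := by
      rcases mul_eq_zero.mp hi with h | h
      · exact absurd h (hwpos i).ne'
      · exact h
    have h3 : a i / w i = A := by
      have := pow_eq_zero_iff (n := 2) (by norm_num) |>.mp h2
      linarith
    have hwne := (hwpos i).ne'
    field_simp at h3
    show a i = w i * M
    rw [← hAeqM]
    linarith
  · intro h
    have hSM : S = M ^ 2 := by
      rw [hSdef]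
      have : ∀ i, a i ^ 2 / w i = w i * M ^ 2 := by
        intro i
        rw [show a i = w i * M from h i]
        have hwne := (hwpos i).ne'
        field_simp
      simp_rw [this]
      rw [← Finset.sum_mul, hwsum, one_mul]
    rw [hlam, hSM, Real.sqrt_sq hM0, sub_self, zero_div]
end
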